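/- Let (X, μ) be a σ-finite measure space and let f_k : X → ℂ, k ≥ 1, be measurable functions such that ∑_{k=1}^∞ ‖f_k‖_{1,∞}·(1 + log k) < ∞. Suppose f : X → ℂ is measurable and that for μ-almost every x the series ∑_{k=1}^∞ f_k(x) converges to f(x). Then ‖f‖_{1,∞} ≤ 4·∑_{k=1}^∞ ‖f_k‖_{1,∞}·(1 + log k). -/

import Mathlib

open MeasureTheory ENNReal Filter Set

/-- The weak-`L¹` quasi-norm `‖h‖_{1,∞} = sup_{t>0} t · μ {x : |h x| > t}`. -/
noncomputable def weakL1 {X : Type*} [MeasurableSpace X] (μ : Measure X) (h : X → ℂ) : ℝ≥0∞ :=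
  ⨆ t ∈ Set.Ioi (0 : ℝ), ENNReal.ofReal t * μ {x | t < ‖h x‖}

lemma weakL1_cheb {X : Type*} [MeasurableSpace X] (μ : Measure X) (h : X → ℂ)
    {t : ℝ} (ht : 0 < t) : μ {x | t < ‖h x‖} ≤ weakL1 μ h / ENNReal.ofReal t := by
  rw [ENNReal.le_div_iff_mul_le (Or.inl (by simp [ht.ne', ht])) (Or.inl ENNReal.ofReal_ne_top),
    mul_comm]
  exact le_biSup (fun s => ENNReal.ofReal s * μ {x | s < ‖h x‖}) (Set.mem_Ioi.2 ht)

lemma enn_alg {A m C : ℝ≥0∞} (hA0 : A ≠ 0) (hAt : A ≠ ∞) (hm0 : m ≠ 0) (hmt : m ≠ ∞) :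
    A / (A / m * C) = m * C⁻¹ := by
  have hdiv0 : A / m ≠ 0 := by simp [ENNReal.div_eq_zero_iff, hA0, hmt]
  have hdivt : A / m ≠ ∞ := by simp [ENNReal.div_eq_top, hA0, hAt, hm0]
  rw [div_eq_mul_inv, ENNReal.mul_inv (Or.inl hdiv0) (Or.inl hdivt),
    ENNReal.inv_div (Or.inr hAt) (Or.inr hA0), ← mul_assoc,
    ENNReal.mul_div_cancel hA0 hAt]

lemma kappa_bound : ∑' j : ℕ, (ENNReal.ofReal (Real.exp 2 * ((j : ℝ) + 1) ^ 2))⁻¹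
    ≤ (4 : ℝ≥0∞)⁻¹ := by
  have hexp7 : (7 : ℝ) ≤ Real.exp 2 := by
    have h : Real.exp 2 = Real.exp 1 * Real.exp 1 := by rw [← Real.exp_add]; norm_num
    nlinarith [Real.exp_one_gt_d9]
  have hbasel : HasSum (fun j : ℕ => ((((j : ℝ) + 1)) ^ 2)⁻¹) (Real.pi ^ 2 / 6) := by
    have h2 := (hasSum_nat_add_iff (f := fun n : ℕ => (1 : ℝ) / (n : ℝ) ^ 2) 1).2
      (by simpa using hasSum_zeta_two)
    convert h2 using 2 with j
    · rfl
    push_cast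
    rw [one_div]
  have hterm : ∀ j : ℕ, (ENNReal.ofReal (Real.exp 2 * ((j : ℝ) + 1) ^ 2))⁻¹
      = ENNReal.ofReal ((Real.exp 2)⁻¹) * ENNReal.ofReal ((((j : ℝ) + 1) ^ 2)⁻¹) := by
    intro j
    rw [← ENNReal.ofReal_inv_of_pos (by positivity), mul_inv,
      ENNReal.ofReal_mul (by positivity)]
  calc ∑' j : ℕ, (ENNReal.ofReal (Real.exp 2 * ((j : ℝ) + 1) ^ 2))⁻¹
      = ENNReal.ofReal ((Real.exp 2)⁻¹) * ∑' j : ℕ, ENNReal.ofReal ((((j : ℝ) + 1) ^ 2)⁻¹) := by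
        rw [tsum_congr hterm, ENNReal.tsum_mul_left]
    _ = ENNReal.ofReal ((Real.exp 2)⁻¹) * ENNReal.ofReal (Real.pi ^ 2 / 6) := by
        rw [← ENNReal.ofReal_tsum_of_nonneg (fun n => by positivity) hbasel.summable,
          hbasel.tsum_eq]
    _ = ENNReal.ofReal ((Real.exp 2)⁻¹ * (Real.pi ^ 2 / 6)) :=
        (ENNReal.ofReal_mul (by positivity)).symm
    _ ≤ ENNReal.ofReal ((4 : ℝ)⁻¹) := by
        refine ENNReal.ofReal_le_ofReal ?_
        have hπ : Real.pi ^ 2 ≤ 9.9225 := by nlinarith [Real.pi_pos, Real.pi_lt_d2]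
        have hinv : (Real.exp 2)⁻¹ ≤ 7⁻¹ := inv_anti₀ (by norm_num) hexp7
        calc (Real.exp 2)⁻¹ * (Real.pi ^ 2 / 6) ≤ 7⁻¹ * (9.9225 / 6) :=
              mul_le_mul hinv (by linarith) (by positivity) (by norm_num)
          _ ≤ (4 : ℝ)⁻¹ := by norm_num
    _ = (4 : ℝ≥0∞)⁻¹ := by
        rw [ENNReal.ofReal_inv_of_pos (by norm_num)]
        norm_num

lemma key_integral {X : Type*} [MeasurableSpace X] (μ : Measure X) {g : X → ℂ}
    (hg : Measurable g) {A : ℝ≥0∞} (hA0 : A ≠ 0) (hAt : A ≠ ∞)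
    (cheb : ∀ s : ℝ, 0 < s → μ {x | s < ‖g x‖} ≤ A / ENNReal.ofReal s)
    {E : Set X} (hm0 : μ E ≠ 0) (hmt : μ E ≠ ∞)
    {c : ℝ} (hc : 1 ≤ c) :
    ∫⁻ x in E, ENNReal.ofReal (min ‖g x‖ ((A / μ E).toReal * c)) ∂μ
      ≤ A * ENNReal.ofReal (1 + Real.log c) := by
  set m := μ E with hm
  have hdiv0 : A / m ≠ 0 := by
    simp [ENNReal.div_eq_zero_iff, hA0, hmt]
  have hdivt : A / m ≠ ∞ := by
    simp [ENNReal.div_eq_top, hA0, hAt, hm0]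
  set a : ℝ := (A / m).toReal with ha_def
  have ha : 0 < a := ENNReal.toReal_pos hdiv0 hdivt
  set T : ℝ := a * c with hT_def
  have haT : a ≤ T := le_mul_of_one_le_right ha.le hc
  have hT : 0 < T := lt_of_lt_of_le ha haT
  have hnn : 0 ≤ᵐ[μ.restrict E] fun x => min ‖g x‖ T :=
    Eventually.of_forall fun x => le_min (norm_nonneg _) hT.le
  have hmble : AEMeasurable (fun x => min ‖g x‖ T) (μ.restrict E) :=
    (hg.norm.min measurable_const).aemeasurable
  have lc := lintegral_eq_lintegral_meas_lt (μ.restrict E) hnn hmble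
  rw [lc]
  have hsplit1 : Ioi (0:ℝ) = Ioc 0 a ∪ Ioi a := (Set.Ioc_union_Ioi_eq_Ioi ha.le).symm
  have hsplit2 : Ioi (a:ℝ) = Ioc a T ∪ Ioi T := (Set.Ioc_union_Ioi_eq_Ioi haT).symm
  rw [hsplit1, lintegral_union measurableSet_Ioi (Set.Ioc_disjoint_Ioi le_rfl),
    hsplit2, lintegral_union measurableSet_Ioi (Set.Ioc_disjoint_Ioi le_rfl)]
  have h1 : ∫⁻ s in Ioc (0:ℝ) a, (μ.restrict E) {x | s < min ‖g x‖ T} ≤ A := by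
    calc ∫⁻ s in Ioc (0:ℝ) a, (μ.restrict E) {x | s < min ‖g x‖ T}
        ≤ ∫⁻ _ in Ioc (0:ℝ) a, m := by
          refine lintegral_mono fun s => ?_
          calc (μ.restrict E) {x | s < min ‖g x‖ T} ≤ (μ.restrict E) Set.univ :=
                measure_mono (Set.subset_univ _)
            _ = m := by rw [Measure.restrict_apply_univ]
      _ = m * ENNReal.ofReal a := by
          rw [setLIntegral_const, Real.volume_Ioc, sub_zero]
      _ = A := by
          rw [ha_def, ENNReal.ofReal_toReal hdivt, ENNReal.mul_div_cancel hm0 hmt]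
  have h2 : ∫⁻ s in Ioc a T, (μ.restrict E) {x | s < min ‖g x‖ T}
      ≤ A * ENNReal.ofReal (Real.log c) := by
    have step : ∫⁻ s in Ioc a T, (μ.restrict E) {x | s < min ‖g x‖ T}
        ≤ ∫⁻ s in Ioc a T, A * ENNReal.ofReal s⁻¹ := by
      refine setLIntegral_mono (by fun_prop) fun s hs => ?_
      have hs0 : 0 < s := lt_of_le_of_lt ha.le hs.1
      calc (μ.restrict E) {x | s < min ‖g x‖ T} ≤ μ {x | s < min ‖g x‖ T} :=
            Measure.le_iff'.1 Measure.restrict_le_self _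
        _ ≤ μ {x | s < ‖g x‖} := measure_mono fun x (hx : s < min ‖g x‖ T) =>
              lt_of_lt_of_le hx (min_le_left _ _)
        _ ≤ A / ENNReal.ofReal s := cheb s hs0
        _ = A * ENNReal.ofReal s⁻¹ := by
            rw [div_eq_mul_inv, ENNReal.ofReal_inv_of_pos hs0]
    refine step.trans ?_
    rw [lintegral_const_mul _ (by fun_prop)]
    refine mul_le_mul_right (le_of_eq ?_) A
    have hInt : IntegrableOn (fun s : ℝ => s⁻¹) (Ioc a T) := by
      have : IntervalIntegrable (fun s : ℝ => s⁻¹) volume a T := by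
        rw [intervalIntegrable_inv_iff]
        right
        rw [Set.uIcc_of_le haT]
        exact fun h => absurd h.1 (not_le.2 ha)
      exact this.1
    rw [← MeasureTheory.ofReal_integral_eq_lintegral_ofReal hInt
      ((ae_restrict_iff' measurableSet_Ioc).2 (Eventually.of_forall fun s hs =>
        inv_nonneg.2 (le_of_lt (lt_of_le_of_lt ha.le hs.1))))]
    congr 1
    rw [← intervalIntegral.integral_of_le haT, integral_inv (by
      rw [Set.uIcc_of_le haT]; exact fun h => absurd h.1 (not_le.2 ha))]
    rw [hT_def, mul_comm a c, mul_div_assoc, div_self ha.ne', mul_one]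
  have h3 : ∫⁻ s in Ioi T, (μ.restrict E) {x | s < min ‖g x‖ T} = 0 := by
    have : ∀ s ∈ Ioi T, (μ.restrict E) {x | s < min ‖g x‖ T} = 0 := by
      intro s hs
      have : {x | s < min ‖g x‖ T} = (∅ : Set X) := by
        ext x
        simp only [Set.mem_setOf_eq, Set.mem_empty_iff_false, iff_false, not_lt]
        exact le_trans (min_le_right _ _) hs.le
      rw [this, measure_empty]
    rw [setLIntegral_congr_fun measurableSet_Ioi (fun s hs => this s hs), lintegral_zero]
  calc _ ≤ A + (A * ENNReal.ofReal (Real.log c) + 0) :=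
        add_le_add h1 (add_le_add h2 h3.le)
    _ = A * ENNReal.ofReal (1 + Real.log c) := by
        rw [add_zero, ENNReal.ofReal_add zero_le_one (Real.log_nonneg hc), mul_add,
          ENNReal.ofReal_one, mul_one]


/-- Let `(X, μ)` be σ-finite and `f_k : X → ℂ`, `k ≥ 1`, be measurable with
`∑_{k=1}^∞ ‖f_k‖_{1,∞} · (1 + log k) < ∞`. If `f` is measurable and for μ-a.e. `x` the series
`∑_{k=1}^∞ f_k(x)` converges to `f(x)`, then
`‖f‖_{1,∞} ≤ 4 · ∑_{k=1}^∞ ‖f_k‖_{1,∞} · (1 + log k)`. -/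
theorem stmt2 {X : Type*} [MeasurableSpace X] (μ : Measure X) [SigmaFinite μ]
    (f : ℕ → X → ℂ) (F : X → ℂ)
    (hmeas : ∀ k, 1 ≤ k → Measurable (f k)) (hF : Measurable F)
    (hfin : ∑' k : ℕ, weakL1 μ (f (k + 1)) * ENNReal.ofReal (1 + Real.log (k + 1)) < ∞)
    (hconv : ∀ᵐ x ∂μ, Tendsto (fun N => ∑ k ∈ Finset.Icc 1 N, f k x) atTop (nhds (F x))) :
    weakL1 μ F ≤ 4 * ∑' k : ℕ, weakL1 μ (f (k + 1)) * ENNReal.ofReal (1 + Real.log (k + 1)) := by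
  classical
  set S := ∑' k : ℕ, weakL1 μ (f (k + 1)) * ENNReal.ofReal (1 + Real.log (k + 1)) with hS
  set A : ℕ → ℝ≥0∞ := fun k => weakL1 μ (f (k + 1)) with hA
  set w : ℕ → ℝ≥0∞ := fun k => ENNReal.ofReal (1 + Real.log ((k : ℝ) + 1)) with hw
  have hS' : ∑' k, A k * w k = S := tsum_congr fun k => rfl
  have hw1 : ∀ k : ℕ, (1 : ℝ≥0∞) ≤ w k := by
    intro k
    rw [hw]
    exact ENNReal.one_le_ofReal.2 (by
      have : (0:ℝ) ≤ Real.log ((k : ℝ) + 1) := Real.log_nonneg (by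
        have := Nat.cast_nonneg (α := ℝ) k; linarith)
      linarith)
  have hAfin : ∀ k, A k ≠ ∞ := by
    intro k
    have hterm : A k * w k < ∞ := by
      rw [hS'] at *
      exact lt_of_le_of_lt (by
        rw [← hS']
        exact ENNReal.le_tsum k) hfin
    intro h
    rw [h, ENNReal.top_mul (fun h0 => by simpa [h0] using hw1 k)] at hterm
    exact (lt_irrefl _) hterm
  -- unfold the sup
  rw [weakL1]
  refine iSup₂_le fun t ht => ?_
  rw [Set.mem_Ioi] at ht
  set G := {x | t < ‖F x‖} with hG
  have hGm : MeasurableSet G := measurableSet_lt measurable_const hF.norm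
  have hμG : μ G = ⨆ n, μ (G ∩ spanningSets μ n) := by
    have hmono : Monotone fun n => G ∩ spanningSets μ n :=
      fun i j h => Set.inter_subset_inter subset_rfl (monotone_spanningSets μ h)
    have hdir : Directed (· ⊆ ·) fun n => G ∩ spanningSets μ n := hmono.directed_le
    calc μ G = μ (⋃ n, G ∩ spanningSets μ n) := by
          rw [← Set.inter_iUnion, iUnion_spanningSets, Set.inter_univ]
      _ = ⨆ n, μ (G ∩ spanningSets μ n) := hdir.measure_iUnion
  rw [hμG, ENNReal.mul_iSup]
  refine iSup_le fun n => ?_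
  set E := G ∩ spanningSets μ n with hE_def
  have hEm : MeasurableSet E := hGm.inter (measurableSet_spanningSets μ n)
  have hEt : μ E ≠ ∞ :=
    (lt_of_le_of_lt (measure_mono Set.inter_subset_right) (measure_spanningSets_lt_top μ n)).ne
  rcases eq_or_ne (μ E) 0 with h0 | hE0
  · rw [h0, mul_zero]; exact zero_le
  set m := μ E with hm
  have cheb : ∀ j : ℕ, ∀ s : ℝ, 0 < s →
      μ {x | s < ‖f (j + 1) x‖} ≤ A j / ENNReal.ofReal s :=
    fun j s hs => weakL1_cheb μ _ hs
  set c : ℕ → ℝ := fun j => Real.exp 2 * ((j : ℝ) + 1) ^ 2 with hc_def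
  have hc1 : ∀ j, 1 ≤ c j := by
    intro j
    have h1 : (1:ℝ) ≤ Real.exp 2 := Real.one_le_exp (by norm_num)
    have h2 : (1:ℝ) ≤ ((j : ℝ) + 1) ^ 2 := by nlinarith [Nat.cast_nonneg (α := ℝ) j]
    calc (1:ℝ) = 1 * 1 := by norm_num
      _ ≤ Real.exp 2 * ((j : ℝ) + 1) ^ 2 := mul_le_mul h1 h2 (by norm_num) (by positivity)
  have hCpos : ∀ j, ENNReal.ofReal (c j) ≠ 0 := fun j => by
    simp [ENNReal.ofReal_eq_zero, not_le, lt_of_lt_of_le one_pos (hc1 j)]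
  set τ : ℕ → ℝ := fun j => (A j / m).toReal * c j with hτ
  set B : ℕ → Set X := fun j => {x | τ j < ‖f (j + 1) x‖} with hB
  have hBm : ∀ j, MeasurableSet (B j) :=
    fun j => measurableSet_lt measurable_const (hmeas (j + 1) (Nat.le_add_left 1 j)).norm
  have claim_bad : ∀ j, μ (B j) ≤ m * (ENNReal.ofReal (c j))⁻¹ := by
    intro j
    rcases eq_or_ne (A j) 0 with hA0 | hA0
    · have hτ0 : τ j = 0 := by rw [hτ]; simp [hA0]
      have hz : ∀ i : ℕ, μ {x | ((i : ℝ) + 1)⁻¹ < ‖f (j + 1) x‖} = 0 := by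
        intro i
        have := cheb j ((i : ℝ) + 1)⁻¹ (by positivity)
        rwa [hA0, ENNReal.zero_div, le_zero_iff] at this
      have hsub : B j ⊆ ⋃ i : ℕ, {x | ((i : ℝ) + 1)⁻¹ < ‖f (j + 1) x‖} := by
        intro x hx
        have hx' : 0 < ‖f (j + 1) x‖ := by
          have : τ j < ‖f (j + 1) x‖ := hx
          rwa [hτ0] at this
        obtain ⟨i, hi⟩ := exists_nat_gt (‖f (j + 1) x‖)⁻¹
        refine Set.mem_iUnion.2 ⟨i, ?_⟩
        have h2 : (‖f (j + 1) x‖)⁻¹ < (i : ℝ) + 1 := hi.trans (lt_add_one _)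
        exact (inv_lt_comm₀ (by positivity : (0:ℝ) < (i : ℝ) + 1) hx').mpr h2
      calc μ (B j) ≤ μ (⋃ i : ℕ, {x | ((i : ℝ) + 1)⁻¹ < ‖f (j + 1) x‖}) := measure_mono hsub
        _ = 0 := measure_iUnion_null hz
        _ ≤ m * (ENNReal.ofReal (c j))⁻¹ := zero_le
    · have hdiv0 : A j / m ≠ 0 := by simp [ENNReal.div_eq_zero_iff, hA0, hEt]
      have hdivt : A j / m ≠ ∞ := by simp [ENNReal.div_eq_top, hA0, hAfin j, hE0]
      have hτpos : 0 < τ j := by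
        rw [hτ]
        exact mul_pos (ENNReal.toReal_pos hdiv0 hdivt) (lt_of_lt_of_le one_pos (hc1 j))
      have h1 := cheb j (τ j) hτpos
      have h2 : ENNReal.ofReal (τ j) = A j / m * ENNReal.ofReal (c j) := by
        rw [hτ]
        rw [ENNReal.ofReal_mul ENNReal.toReal_nonneg, ENNReal.ofReal_toReal hdivt]
      rw [h2] at h1
      calc μ (B j) ≤ A j / (A j / m * ENNReal.ofReal (c j)) := h1
        _ = m * (ENNReal.ofReal (c j))⁻¹ := enn_alg hA0 (hAfin j) hE0 hEt
  have bad_total : μ (⋃ j, B j) ≤ m * 4⁻¹ := by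
    calc μ (⋃ j, B j) ≤ ∑' j, μ (B j) := measure_iUnion_le _
      _ ≤ ∑' j, m * (ENNReal.ofReal (c j))⁻¹ := ENNReal.tsum_le_tsum claim_bad
      _ = m * ∑' j, (ENNReal.ofReal (c j))⁻¹ := ENNReal.tsum_mul_left
      _ ≤ m * 4⁻¹ := mul_le_mul_right kappa_bound m
  set U := ⋃ j, B j with hU
  have hUm : MeasurableSet U := MeasurableSet.iUnion hBm
  set E' := E \ U with hE'
  have hE'm : MeasurableSet E' := hEm.diff hUm
  have henorm : ∀ᵐ x ∂μ, ENNReal.ofReal ‖F x‖ ≤ ∑' j : ℕ, ENNReal.ofReal ‖f (j + 1) x‖ := by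
    filter_upwards [hconv] with x hx
    have hlim : Tendsto (fun N => ENNReal.ofReal ‖∑ k ∈ Finset.Icc 1 N, f k x‖) atTop
        (nhds (ENNReal.ofReal ‖F x‖)) :=
      (ENNReal.continuous_ofReal.tendsto _).comp ((continuous_norm.tendsto _).comp hx)
    refine le_of_tendsto' hlim fun N => ?_
    calc ENNReal.ofReal ‖∑ k ∈ Finset.Icc 1 N, f k x‖
        ≤ ENNReal.ofReal (∑ k ∈ Finset.Icc 1 N, ‖f k x‖) :=
          ENNReal.ofReal_le_ofReal (norm_sum_le _ _)
      _ = ∑ k ∈ Finset.Icc 1 N, ENNReal.ofReal ‖f k x‖ :=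
          ENNReal.ofReal_sum_of_nonneg fun _ _ => norm_nonneg _
      _ = ∑ i ∈ Finset.range N, ENNReal.ofReal ‖f (1 + i) x‖ := by
          rw [← Finset.Ico_add_one_right_eq_Icc, Finset.sum_Ico_eq_sum_range, Nat.add_sub_cancel]
      _ = ∑ i ∈ Finset.range N, ENNReal.ofReal ‖f (i + 1) x‖ := by
          refine Finset.sum_congr rfl fun i _ => by rw [add_comm]
      _ ≤ ∑' j : ℕ, ENNReal.ofReal ‖f (j + 1) x‖ := ENNReal.sum_le_tsum _
  have good : ENNReal.ofReal t * μ E' ≤ 3 * S := by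
    have step1 : ENNReal.ofReal t * μ E'
        ≤ ∑' j : ℕ, ∫⁻ x in E, ENNReal.ofReal (min ‖f (j + 1) x‖ (τ j)) ∂μ := by
      have hpt : ∀ᵐ x ∂(μ.restrict E'),
          ENNReal.ofReal t ≤ ∑' j : ℕ, ENNReal.ofReal (min ‖f (j + 1) x‖ (τ j)) := by
        rw [ae_restrict_iff' hE'm]
        filter_upwards [henorm] with x hx hxE'
        have hxG : t < ‖F x‖ := hxE'.1.1
        have hxB : ∀ j, ‖f (j + 1) x‖ ≤ τ j := fun j =>
          le_of_not_gt fun h => hxE'.2 (Set.mem_iUnion.2 ⟨j, h⟩)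
        calc ENNReal.ofReal t ≤ ENNReal.ofReal ‖F x‖ := ENNReal.ofReal_le_ofReal hxG.le
          _ ≤ ∑' j : ℕ, ENNReal.ofReal ‖f (j + 1) x‖ := hx
          _ = ∑' j : ℕ, ENNReal.ofReal (min ‖f (j + 1) x‖ (τ j)) :=
            tsum_congr fun j => by rw [min_eq_left (hxB j)]
      calc ENNReal.ofReal t * μ E' = ∫⁻ _ in E', ENNReal.ofReal t ∂μ :=
            (setLIntegral_const _ _).symm
        _ ≤ ∫⁻ x in E', ∑' j : ℕ, ENNReal.ofReal (min ‖f (j + 1) x‖ (τ j)) ∂μ :=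
            lintegral_mono_ae hpt
        _ = ∑' j : ℕ, ∫⁻ x in E', ENNReal.ofReal (min ‖f (j + 1) x‖ (τ j)) ∂μ :=
            lintegral_tsum fun j =>
              (((hmeas (j + 1) (Nat.le_add_left 1 j)).norm.min
                measurable_const).ennreal_ofReal).aemeasurable
        _ ≤ ∑' j : ℕ, ∫⁻ x in E, ENNReal.ofReal (min ‖f (j + 1) x‖ (τ j)) ∂μ :=
            ENNReal.tsum_le_tsum fun j =>
              lintegral_mono' (Measure.restrict_mono Set.diff_subset le_rfl) le_rfl
    refine step1.trans ?_
    have perj : ∀ j, ∫⁻ x in E, ENNReal.ofReal (min ‖f (j + 1) x‖ (τ j)) ∂μ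
        ≤ 3 * (A j * w j) := by
      intro j
      rcases eq_or_ne (A j) 0 with hA0 | hA0
      · have hτ0 : τ j = 0 := by rw [hτ]; simp [hA0]
        have hmin : ∀ x : X, ENNReal.ofReal (min ‖f (j + 1) x‖ (τ j)) = 0 := by
          intro x
          rw [hτ0, min_eq_right (norm_nonneg _), ENNReal.ofReal_zero]
        simp only [hmin, lintegral_zero]
        exact zero_le
      · have hk := key_integral μ (hmeas (j + 1) (Nat.le_add_left 1 j)) hA0 (hAfin j)
          (cheb j) hE0 hEt (hc1 j)
        refine hk.trans ?_
        have hlog : 1 + Real.log (c j) = 3 + 2 * Real.log ((j : ℝ) + 1) := by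
          rw [hc_def]
          have : Real.log (Real.exp 2 * ((j : ℝ) + 1) ^ 2)
              = 2 + 2 * Real.log ((j : ℝ) + 1) := by
            rw [Real.log_mul (Real.exp_ne_zero 2) (by positivity), Real.log_exp,
              Real.log_pow]
            push_cast
            ring
          rw [this]
          ring
        rw [hlog]
        have hL : 0 ≤ Real.log ((j : ℝ) + 1) :=
          Real.log_nonneg (by have := Nat.cast_nonneg (α := ℝ) j; linarith)
        have h3w : ENNReal.ofReal (3 + 2 * Real.log ((j : ℝ) + 1)) ≤ 3 * w j := by
          calc ENNReal.ofReal (3 + 2 * Real.log ((j : ℝ) + 1))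
              ≤ ENNReal.ofReal (3 * (1 + Real.log ((j : ℝ) + 1))) :=
                ENNReal.ofReal_le_ofReal (by nlinarith)
            _ = 3 * w j := by
                rw [hw, ENNReal.ofReal_mul (by norm_num)]
                norm_num
        calc A j * ENNReal.ofReal (3 + 2 * Real.log ((j : ℝ) + 1))
            ≤ A j * (3 * w j) := mul_le_mul_right h3w _
          _ = 3 * (A j * w j) := by ring
    calc ∑' j : ℕ, ∫⁻ x in E, ENNReal.ofReal (min ‖f (j + 1) x‖ (τ j)) ∂μ
        ≤ ∑' j, 3 * (A j * w j) := ENNReal.tsum_le_tsum perj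
      _ = 3 * ∑' j, A j * w j := ENNReal.tsum_mul_left
      _ = 3 * S := by rw [hS']
  -- combine the two parts
  have hsplit : μ E ≤ μ U + μ E' := by
    calc μ E ≤ μ (U ∪ E') := measure_mono fun x hx => by
          by_cases h : x ∈ U
          · exact Or.inl h
          · exact Or.inr ⟨hx, h⟩
      _ ≤ μ U + μ E' := measure_union_le _ _
  have main : ENNReal.ofReal t * m ≤ 4⁻¹ * (ENNReal.ofReal t * m) + 3 * S := by
    calc ENNReal.ofReal t * m ≤ ENNReal.ofReal t * (μ U + μ E') := mul_le_mul_right hsplit _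
      _ = ENNReal.ofReal t * μ U + ENNReal.ofReal t * μ E' := mul_add _ _ _
      _ ≤ ENNReal.ofReal t * (m * 4⁻¹) + 3 * S := add_le_add (mul_le_mul_right bad_total _) good
      _ = 4⁻¹ * (ENNReal.ofReal t * m) + 3 * S := by ring
  set Xv := ENNReal.ofReal t * m with hXv
  have hXt : Xv ≠ ∞ := ENNReal.mul_ne_top ENNReal.ofReal_ne_top hEt
  have h44 : (4 : ℝ≥0∞) * (4⁻¹ * Xv) = Xv := by
    rw [← mul_assoc, ENNReal.mul_inv_cancel (by norm_num) (by norm_num), one_mul]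
  have h4m : (4:ℝ≥0∞) * Xv ≤ Xv + 4 * (3 * S) := by
    calc (4:ℝ≥0∞) * Xv ≤ 4 * (4⁻¹ * Xv + 3 * S) := mul_le_mul_right main 4
      _ = Xv + 4 * (3 * S) := by rw [mul_add, h44]
  have h3X : 3 * Xv ≤ 4 * (3 * S) := by
    have h' : Xv + 3 * Xv ≤ Xv + 4 * (3 * S) := by
      calc Xv + 3 * Xv = 4 * Xv := by ring
        _ ≤ Xv + 4 * (3 * S) := h4m
    exact (ENNReal.add_le_add_iff_left hXt).1 h'
  have hfinal : 3 * Xv ≤ 3 * (4 * S) := by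
    calc 3 * Xv ≤ 4 * (3 * S) := h3X
      _ = 3 * (4 * S) := by ring
  exact (ENNReal.mul_le_mul_iff_right (by norm_num) (by norm_num)).1 hfinal
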